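/- Let k be an even integer with k ≥ 4, let d = (3k+4)/2, and let C be a symmetric (d,k) circuit code of length 4k+6 whose transition sequence has the form T(C) = (ω₁, x, ω₂, ω₁, x, ω₂), where ω₁ = (1,2,...,k+2) and ω₂ = (β₁,...,β_k). If x ∈ {1,2} and β₂ = 3, then either the segment (4,5,...,k+2, x, β₁, β₂, β₃) is a bit run of length k+3, or β₃ = 5 and the segment (β₄,...,β_k, 1, 2, 3, 4, 5, 6) is a bit run of length k+3. -/

import Mathlib

/-- The graph of the `d`-dimensional hypercube: vertices are binary vectors of
length `d`, adjacent iff they differ in exactly one coordinate. -/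
def hypercube (d : ℕ) : SimpleGraph (Fin d → Bool) where
  Adj x y := hammingDist x y = 1
  symm := by
    constructor
    intro x y h
    rwa [hammingDist_comm]
  loopless := by
    constructor
    intro x h
    simp [hammingDist_self] at h

/-- Distance along a cycle of length `N` between positions `i` and `j`. -/
def cycDist {N : ℕ} (i j : ZMod N) : ℕ := min (i - j).val (j - i).val

/-- `x : ZMod N → (Fin d → Bool)` is a `(d,k)` circuit code of length `N`:
a cycle in the hypercube `I(d)` satisfying the spread-`k` distance requirement. -/
structure IsCircuitCode (d k N : ℕ) (x : ZMod N → Fin d → Bool) : Prop where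
  inj : Function.Injective x
  adj : ∀ i : ZMod N, (hypercube d).Adj (x i) (x (i + 1))
  spread : ∀ i j : ZMod N, min (cycDist i j) k ≤ (hypercube d).dist (x i) (x j)

/-- `τ` is the transition sequence of the cycle `x`: `τ i` is the unique
coordinate in which `x i` and `x (i+1)` differ. -/
def IsTransitionSeq {d N : ℕ} (x : ZMod N → Fin d → Bool) (τ : ZMod N → Fin d) : Prop :=
  ∀ (i : ZMod N) (j : Fin d), x (i + 1) j ≠ x i j ↔ j = τ i

/-- The segment of `τ` of length `m` starting at position `start` is a bit run:
all of its entries are distinct. -/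
def IsBitRun {d N : ℕ} (τ : ZMod N → Fin d) (start : ZMod N) (m : ℕ) : Prop :=
  ∀ a b : Fin m, τ (start + ((a : ℕ) : ZMod N)) = τ (start + ((b : ℕ) : ZMod N)) → a = b

/-- `δ(ω)`: the number of coordinates appearing an odd number of times in the
segment of `τ` of length `m` starting at `start`. -/
def segDelta {d N : ℕ} (τ : ZMod N → Fin d) (start : ZMod N) (m : ℕ) : ℕ :=
  (Finset.univ.filter fun c : Fin d =>
    Odd (Finset.univ.filter fun t : Fin m => τ (start + ((t : ℕ) : ZMod N)) = c).card).card

-- LEMMA 1: parity flip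
lemma flip_iff {d N : ℕ} {x : ZMod N → Fin d → Bool} {τ : ZMod N → Fin d}
    (hτ : IsTransitionSeq x τ) (i : ZMod N) (j : Fin d) :
    ∀ m : ℕ, (x (i + ((m : ℕ) : ZMod N)) j ≠ x i j ↔
      Odd (Finset.univ.filter fun t : Fin m => τ (i + ((t : ℕ) : ZMod N)) = j).card) := by
  intro m
  induction m with
  | zero => simp
  | succ m ih =>
    have key := hτ (i + ((m : ℕ) : ZMod N)) j
    have hcast : ((m + 1 : ℕ) : ZMod N) = ((m : ℕ) : ZMod N) + 1 := by push_cast; ring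
    have hcard : (Finset.univ.filter fun t : Fin (m+1) => τ (i + ((t : ℕ) : ZMod N)) = j).card
        = (Finset.univ.filter fun t : Fin m => τ (i + ((t : ℕ) : ZMod N)) = j).card
          + (if τ (i + ((m : ℕ) : ZMod N)) = j then 1 else 0) := by
      rw [Finset.card_filter, Finset.card_filter, Fin.sum_univ_castSucc]
      simp
    rw [hcast, ← add_assoc, hcard]
    by_cases hj : τ (i + ((m : ℕ) : ZMod N)) = j
    · simp only [hj, if_pos rfl, if_true]
      have h2 : x (i + ((m : ℕ) : ZMod N) + 1) j ≠ x (i + ((m : ℕ) : ZMod N)) j :=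
        key.mpr hj.symm
      rw [Nat.odd_add_one]
      cases h0 : x i j <;> cases h1 : x (i + ((m : ℕ) : ZMod N)) j <;>
        cases h2' : x (i + ((m : ℕ) : ZMod N) + 1) j <;> simp_all
    · simp only [if_neg hj, add_zero]
      have h2 : x (i + ((m : ℕ) : ZMod N) + 1) j = x (i + ((m : ℕ) : ZMod N)) j := by
        by_contra hc
        exact hj (key.mp hc).symm
      rw [h2]
      exact ih

-- LEMMA 2: hamming dist equals segDelta
lemma hamming_eq_segDelta {d N : ℕ} {x : ZMod N → Fin d → Bool} {τ : ZMod N → Fin d}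
    (hτ : IsTransitionSeq x τ) (i : ZMod N) (m : ℕ) :
    hammingDist (x i) (x (i + ((m : ℕ) : ZMod N))) = segDelta τ i m := by
  rw [hammingDist, segDelta]
  congr 1
  apply Finset.filter_congr
  intro j _
  rw [ne_comm]
  exact (flip_iff hτ i j m)

-- LEMMA 3: walk of length hammingDist
lemma exists_walk_hamming {d : ℕ} :
    ∀ (n : ℕ) (a b : Fin d → Bool), hammingDist a b = n →
      ∃ p : (hypercube d).Walk a b, p.length = n := by
  intro n
  induction n with
  | zero =>
    intro a b h
    rw [hammingDist_eq_zero] at h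
    subst h
    exact ⟨SimpleGraph.Walk.nil, rfl⟩
  | succ n ih =>
    intro a b h
    have hne : a ≠ b := by
      intro hab; subst hab; rw [hammingDist_self] at h; omega
    obtain ⟨j, hj⟩ := Function.ne_iff.mp hne
    set a' := Function.update a j (b j) with ha'
    have hsub : (Finset.univ.filter fun i => a' i ≠ b i)
        = (Finset.univ.filter fun i => a i ≠ b i) \ {j} := by
      ext t
      simp only [Finset.mem_filter, Finset.mem_sdiff, Finset.mem_singleton, Finset.mem_univ,
        true_and]
      by_cases htj : t = j
      · subst htj; simp [ha', Function.update_self]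
      · simp [ha', Function.update_of_ne htj, htj]
    have hmem : j ∈ Finset.univ.filter fun i => a i ≠ b i := by
      simp [hj]
    have hcard : hammingDist a' b = n := by
      rw [hammingDist, hsub, Finset.card_sdiff_of_subset (by simpa using hmem)]
      rw [hammingDist] at h
      simp only [Finset.card_singleton]
      omega
    have hadj : (hypercube d).Adj a a' := by
      show hammingDist a a' = 1
      rw [hammingDist]
      have : (Finset.univ.filter fun i => a i ≠ a' i) = {j} := by
        ext t
        simp only [Finset.mem_filter, Finset.mem_univ, true_and, Finset.mem_singleton]
        by_cases htj : t = j
        · subst htj; simp [ha', Function.update_self, hj]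
        · simp only [ha', Function.update_of_ne htj, ne_eq, not_true_eq_false,
            Finset.mem_singleton, iff_false]
          simpa using htj
      rw [this, Finset.card_singleton]
    obtain ⟨p, hp⟩ := ih a' b hcard
    exact ⟨SimpleGraph.Walk.cons hadj p, by simp [hp]⟩

lemma hypercube_dist_le_hamming {d : ℕ} (a b : Fin d → Bool) :
    (hypercube d).dist a b ≤ hammingDist a b := by
  obtain ⟨p, hp⟩ := exists_walk_hamming (hammingDist a b) a b rfl
  calc (hypercube d).dist a b ≤ p.length := SimpleGraph.dist_le p
    _ = hammingDist a b := hp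

-- LEMMA 4: upper bound on segDelta from repeated values
lemma segDelta_le_of_reps {d N : ℕ} (τ : ZMod N → Fin d) (s : ZMod N) (m : ℕ)
    (S : Finset (Fin d))
    (hS : ∀ v ∈ S, 2 ≤ (Finset.univ.filter fun t : Fin m => τ (s + ((t : ℕ) : ZMod N)) = v).card) :
    segDelta τ s m + 2 * S.card ≤ m := by
  set c : Fin d → ℕ := fun v => (Finset.univ.filter fun t : Fin m => τ (s + ((t : ℕ) : ZMod N)) = v).card with hc
  have hsum : ∑ v : Fin d, c v = m := by
    have := Finset.card_eq_sum_card_fiberwise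
      (f := fun t : Fin m => τ (s + ((t : ℕ) : ZMod N))) (s := Finset.univ) (t := Finset.univ)
      (fun x _ => Finset.mem_univ _)
    simpa using this.symm
  have hδ : segDelta τ s m = ∑ v : Fin d, (if Odd (c v) then 1 else 0) := by
    rw [segDelta, Finset.card_filter]
  have hsplit1 : ∑ v ∈ Finset.univ \ S, (if Odd (c v) then 1 else 0) + ∑ v ∈ S, (if Odd (c v) then 1 else 0)
      = ∑ v : Fin d, (if Odd (c v) then 1 else 0) :=
    Finset.sum_sdiff (Finset.subset_univ S)
  have hsplit2 : ∑ v ∈ Finset.univ \ S, c v + ∑ v ∈ S, c v = ∑ v : Fin d, c v :=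
    Finset.sum_sdiff (Finset.subset_univ S)
  have hb1 : ∑ v ∈ Finset.univ \ S, (if Odd (c v) then 1 else 0) ≤ ∑ v ∈ Finset.univ \ S, c v := by
    apply Finset.sum_le_sum
    intro v _
    by_cases h : Odd (c v)
    · simp only [if_pos h]
      rcases h with ⟨w, hw⟩; omega
    · simp [h]
  have hb2 : ∑ v ∈ S, ((if Odd (c v) then 1 else 0) + 2) ≤ ∑ v ∈ S, c v := by
    apply Finset.sum_le_sum
    intro v hv
    have h2 : 2 ≤ c v := hS v hv
    by_cases h : Odd (c v)
    · simp only [if_pos h]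
      rw [Nat.odd_iff] at h
      omega
    · simp only [if_neg h]
      omega
  rw [Finset.sum_add_distrib, Finset.sum_const, smul_eq_mul] at hb2
  omega

-- two distinct indices give count ≥ 2
lemma two_le_count {d N m : ℕ} (τ : ZMod N → Fin d) (s : ZMod N) (v : Fin d)
    (a b : Fin m) (hab : a ≠ b) (ha : τ (s + ((a : ℕ) : ZMod N)) = v)
    (hb : τ (s + ((b : ℕ) : ZMod N)) = v) :
    2 ≤ (Finset.univ.filter fun t : Fin m => τ (s + ((t : ℕ) : ZMod N)) = v).card := by
  have hsub : ({a, b} : Finset (Fin m)) ⊆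
      Finset.univ.filter fun t : Fin m => τ (s + ((t : ℕ) : ZMod N)) = v := by
    intro t ht
    rw [Finset.mem_insert, Finset.mem_singleton] at ht
    rcases ht with rfl | rfl <;> simp [ha, hb]
  calc 2 = ({a, b} : Finset (Fin m)).card := (Finset.card_pair hab).symm
    _ ≤ _ := Finset.card_le_card hsub

-- LEMMA 5: lower bound on segDelta from the spread condition
lemma segDelta_ge {d k N : ℕ} [NeZero N] {x : ZMod N → Fin d → Bool}
    (hx : IsCircuitCode d k N x) {τ : ZMod N → Fin d} (hτ : IsTransitionSeq x τ)
    (s : ZMod N) (m : ℕ) (h1 : 0 < m) (h2 : 2 * m ≤ N) :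
    min m k ≤ segDelta τ s m := by
  have hmN : m < N := by omega
  have hNm : (((N - m : ℕ)) : ZMod N) = - ((m : ℕ) : ZMod N) := by
    rw [Nat.cast_sub hmN.le, ZMod.natCast_self]; ring
  have hv1 : ((s + ((m : ℕ) : ZMod N)) - s).val = m := by
    rw [show s + ((m : ℕ) : ZMod N) - s = ((m : ℕ) : ZMod N) by ring]
    exact ZMod.val_cast_of_lt hmN
  have hv2 : (s - (s + ((m : ℕ) : ZMod N))).val = N - m := by
    rw [show s - (s + ((m : ℕ) : ZMod N)) = - ((m : ℕ) : ZMod N) by ring, ← hNm]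
    exact ZMod.val_cast_of_lt (by omega)
  have hcyc : cycDist s (s + ((m : ℕ) : ZMod N)) = m := by
    rw [cycDist, hv1, hv2]
    omega
  have hsp := hx.spread s (s + ((m : ℕ) : ZMod N))
  rw [hcyc] at hsp
  calc min m k ≤ (hypercube d).dist (x s) (x (s + ((m : ℕ) : ZMod N))) := hsp
    _ ≤ hammingDist (x s) (x (s + ((m : ℕ) : ZMod N))) := hypercube_dist_le_hamming _ _
    _ = segDelta τ s m := hamming_eq_segDelta hτ s m


/-- For even `k ≥ 4`, `d = (3k+4)/2`, and a symmetric `(d,k)` circuit code of length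
`4k+6` whose transition sequence has the form `(ω₁, x, ω₂, ω₁, x, ω₂)` with
`ω₁ = (1,...,k+2)` (coordinates modeled 0-based as `Fin d`): if `x ∈ {1,2}` (0-based
value `0` or `1`) and `β₂ = 3` (0-based value `2`, at position `k+4`), then either the
segment `(4,...,k+2,x,β₁,β₂,β₃)` (starting at position `3`, of length `k+3`) is a
bit run, or `β₃ = 5` (0-based value `4`) and the segment `(β₄,...,β_k,1,2,3,4,5,6)`
(starting at position `k+6`, of length `k+3`) is a bit run. -/
theorem stmt_16 (k d : ℕ) (hk : Even k) (hk4 : 4 ≤ k) (hd : 2 * d = 3 * k + 4)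
    (x : ZMod (4 * k + 6) → Fin d → Bool)
    (hx : IsCircuitCode d k (4 * k + 6) x)
    (τ : ZMod (4 * k + 6) → Fin d) (hτ : IsTransitionSeq x τ)
    (hsym : ∀ i : ZMod (4 * k + 6), τ (i + ((2 * k + 3 : ℕ) : ZMod (4 * k + 6))) = τ i)
    (hω₁ : ∀ i : ℕ, i ≤ k + 1 → (τ ((i : ℕ) : ZMod (4 * k + 6))).val = i)
    (hx12 : (τ ((k + 2 : ℕ) : ZMod (4 * k + 6))).val = 0 ∨
            (τ ((k + 2 : ℕ) : ZMod (4 * k + 6))).val = 1)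
    (hβ₂ : (τ ((k + 4 : ℕ) : ZMod (4 * k + 6))).val = 2) :
    IsBitRun τ ((3 : ℕ) : ZMod (4 * k + 6)) (k + 3) ∨
      ((τ ((k + 5 : ℕ) : ZMod (4 * k + 6))).val = 4 ∧
        IsBitRun τ ((k + 6 : ℕ) : ZMod (4 * k + 6)) (k + 3)) := by
  haveI : NeZero (4 * k + 6) := ⟨by omega⟩
  have hτeq : ∀ u v : ZMod (4 * k + 6), (τ u).val = (τ v).val → τ u = τ v :=
    fun u v h => Fin.ext h
  have hcast : ∀ p q : ℕ, ((p + q : ℕ) : ZMod (4 * k + 6)) =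
      ((p : ℕ) : ZMod (4 * k + 6)) + ((q : ℕ) : ZMod (4 * k + 6)) := fun p q => by
    push_cast; ring
  have hval2 : ∀ p : ℕ, p ≤ k + 1 → (τ ((2 * k + 3 + p : ℕ) : ZMod (4 * k + 6))).val = p := by
    intro p hp
    rw [show (2 * k + 3 + p : ℕ) = p + (2 * k + 3) by ring, hcast]
    rw [hsym ((p : ℕ) : ZMod (4 * k + 6))]
    exact hω₁ p hp
  -- no collision at cyclic distance 1..k
  have CL : ∀ p t : ℕ, 1 ≤ t → t ≤ k →
      τ ((p : ℕ) : ZMod (4 * k + 6)) = τ ((p + t : ℕ) : ZMod (4 * k + 6)) → False := by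
    intro p t h1 h2 heq
    have hge := segDelta_ge hx hτ ((p : ℕ) : ZMod (4 * k + 6)) (t + 1) (by omega) (by omega)
    have hle := segDelta_le_of_reps τ ((p : ℕ) : ZMod (4 * k + 6)) (t + 1)
        {τ ((p : ℕ) : ZMod (4 * k + 6))} ?_
    · rw [Finset.card_singleton] at hle
      omega
    · intro v hv
      rw [Finset.mem_singleton] at hv
      subst hv
      refine two_le_count τ _ _ (⟨0, by omega⟩ : Fin (t + 1)) (⟨t, by omega⟩ : Fin (t + 1))
        (by simp only [ne_eq, Fin.mk.injEq]; omega) ?_ ?_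
      · simp
      · rw [← hcast]; exact heq.symm
  -- two repeated pairs in a window of length k+3
  have contra2 : ∀ s a1 b1 a2 b2 : ℕ, a1 < k + 3 → b1 < k + 3 → a2 < k + 3 → b2 < k + 3 →
      a1 ≠ b1 → a2 ≠ b2 →
      τ ((s + a1 : ℕ) : ZMod (4 * k + 6)) = τ ((s + b1 : ℕ) : ZMod (4 * k + 6)) →
      τ ((s + a2 : ℕ) : ZMod (4 * k + 6)) = τ ((s + b2 : ℕ) : ZMod (4 * k + 6)) →
      τ ((s + a1 : ℕ) : ZMod (4 * k + 6)) ≠ τ ((s + a2 : ℕ) : ZMod (4 * k + 6)) → False := by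
    intro s a1 b1 a2 b2 ha1 hb1 ha2 hb2 hne1 hne2 heq1 heq2 hnev
    have hge := segDelta_ge hx hτ ((s : ℕ) : ZMod (4 * k + 6)) (k + 3) (by omega) (by omega)
    have hle := segDelta_le_of_reps τ ((s : ℕ) : ZMod (4 * k + 6)) (k + 3)
        {τ ((s + a1 : ℕ) : ZMod (4 * k + 6)), τ ((s + a2 : ℕ) : ZMod (4 * k + 6))} ?_
    · rw [Finset.card_insert_of_notMem (by simpa using hnev), Finset.card_singleton] at hle
      omega
    · intro v hv
      rw [Finset.mem_insert, Finset.mem_singleton] at hv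
      rcases hv with rfl | rfl
      · exact two_le_count τ _ _ (⟨a1, ha1⟩ : Fin (k + 3)) (⟨b1, hb1⟩ : Fin (k + 3))
          (by simp only [ne_eq, Fin.mk.injEq]; exact hne1) (by rw [← hcast])
          (by rw [← hcast]; exact heq1.symm)
      · exact two_le_count τ _ _ (⟨a2, ha2⟩ : Fin (k + 3)) (⟨b2, hb2⟩ : Fin (k + 3))
          (by simp only [ne_eq, Fin.mk.injEq]; exact hne2) (by rw [← hcast])
          (by rw [← hcast]; exact heq2.symm)
  -- three repeated pairs in a window of length k+5
  have contra3 : ∀ s a1 b1 a2 b2 a3 b3 : ℕ,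
      a1 < k + 5 → b1 < k + 5 → a2 < k + 5 → b2 < k + 5 → a3 < k + 5 → b3 < k + 5 →
      a1 ≠ b1 → a2 ≠ b2 → a3 ≠ b3 →
      τ ((s + a1 : ℕ) : ZMod (4 * k + 6)) = τ ((s + b1 : ℕ) : ZMod (4 * k + 6)) →
      τ ((s + a2 : ℕ) : ZMod (4 * k + 6)) = τ ((s + b2 : ℕ) : ZMod (4 * k + 6)) →
      τ ((s + a3 : ℕ) : ZMod (4 * k + 6)) = τ ((s + b3 : ℕ) : ZMod (4 * k + 6)) →
      τ ((s + a1 : ℕ) : ZMod (4 * k + 6)) ≠ τ ((s + a2 : ℕ) : ZMod (4 * k + 6)) →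
      τ ((s + a1 : ℕ) : ZMod (4 * k + 6)) ≠ τ ((s + a3 : ℕ) : ZMod (4 * k + 6)) →
      τ ((s + a2 : ℕ) : ZMod (4 * k + 6)) ≠ τ ((s + a3 : ℕ) : ZMod (4 * k + 6)) → False := by
    intro s a1 b1 a2 b2 a3 b3 ha1 hb1 ha2 hb2 ha3 hb3 hne1 hne2 hne3 heq1 heq2 heq3 h12 h13 h23
    have hge := segDelta_ge hx hτ ((s : ℕ) : ZMod (4 * k + 6)) (k + 5) (by omega) (by omega)
    have hle := segDelta_le_of_reps τ ((s : ℕ) : ZMod (4 * k + 6)) (k + 5)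
        {τ ((s + a1 : ℕ) : ZMod (4 * k + 6)), τ ((s + a2 : ℕ) : ZMod (4 * k + 6)),
          τ ((s + a3 : ℕ) : ZMod (4 * k + 6))} ?_
    · rw [Finset.card_insert_of_notMem
          (by simp only [Finset.mem_insert, Finset.mem_singleton]; push_neg; exact ⟨h12, h13⟩),
        Finset.card_insert_of_notMem (by simpa using h23), Finset.card_singleton] at hle
      omega
    · intro v hv
      rw [Finset.mem_insert, Finset.mem_insert, Finset.mem_singleton] at hv
      rcases hv with rfl | rfl | rfl
      · exact two_le_count τ _ _ (⟨a1, ha1⟩ : Fin (k + 5)) (⟨b1, hb1⟩ : Fin (k + 5))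
          (by simp only [ne_eq, Fin.mk.injEq]; exact hne1) (by rw [← hcast])
          (by rw [← hcast]; exact heq1.symm)
      · exact two_le_count τ _ _ (⟨a2, ha2⟩ : Fin (k + 5)) (⟨b2, hb2⟩ : Fin (k + 5))
          (by simp only [ne_eq, Fin.mk.injEq]; exact hne2) (by rw [← hcast])
          (by rw [← hcast]; exact heq2.symm)
      · exact two_le_count τ _ _ (⟨a3, ha3⟩ : Fin (k + 5)) (⟨b3, hb3⟩ : Fin (k + 5))
          (by simp only [ne_eq, Fin.mk.injEq]; exact hne3) (by rw [← hcast])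
          (by rw [← hcast]; exact heq3.symm)
  have bitrun_of : ∀ s : ℕ,
      (∀ a b : ℕ, a < b → b < k + 3 →
        τ ((s + a : ℕ) : ZMod (4 * k + 6)) = τ ((s + b : ℕ) : ZMod (4 * k + 6)) → False) →
      IsBitRun τ ((s : ℕ) : ZMod (4 * k + 6)) (k + 3) := by
    intro s h a b heq
    have heq' : τ ((s + (a : ℕ) : ℕ) : ZMod (4 * k + 6))
        = τ ((s + (b : ℕ) : ℕ) : ZMod (4 * k + 6)) := by
      rw [hcast, hcast]; exact heq
    rcases lt_trichotomy (a : ℕ) (b : ℕ) with hlt | he | hgt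
    · exact (h _ _ hlt b.isLt heq').elim
    · exact Fin.ext he
    · exact (h _ _ hgt a.isLt heq'.symm).elim
  -- value facts
  have v3 : (τ ((3 : ℕ) : ZMod (4 * k + 6))).val = 3 := hω₁ 3 (by omega)
  have v4 : (τ ((4 : ℕ) : ZMod (4 * k + 6))).val = 4 := hω₁ 4 (by omega)
  have v5 : (τ ((5 : ℕ) : ZMod (4 * k + 6))).val = 5 := hω₁ 5 (by omega)
  have w2 : (τ ((2 * k + 5 : ℕ) : ZMod (4 * k + 6))).val = 2 := by
    have h := hval2 2 (by omega); rwa [show (2 * k + 3 + 2 : ℕ) = 2 * k + 5 by ring] at h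
  have w3 : (τ ((2 * k + 6 : ℕ) : ZMod (4 * k + 6))).val = 3 := by
    have h := hval2 3 (by omega); rwa [show (2 * k + 3 + 3 : ℕ) = 2 * k + 6 by ring] at h
  have w4 : (τ ((2 * k + 7 : ℕ) : ZMod (4 * k + 6))).val = 4 := by
    have h := hval2 4 (by omega); rwa [show (2 * k + 3 + 4 : ℕ) = 2 * k + 7 by ring] at h
  have w5 : (τ ((2 * k + 8 : ℕ) : ZMod (4 * k + 6))).val = 5 := by
    have h := hval2 5 (by omega); rwa [show (2 * k + 3 + 5 : ℕ) = 2 * k + 8 by ring] at h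
  -- the case β₃ = 3 is impossible
  have hnot3 : (τ ((k + 5 : ℕ) : ZMod (4 * k + 6))).val = 3 → False := by
    intro h3
    apply contra2 (k + 4) 0 (k + 1) 1 (k + 2) (by omega) (by omega) (by omega) (by omega)
      (by omega) (by omega)
    · apply hτeq
      rw [show (k + 4 + 0 : ℕ) = k + 4 by ring, show (k + 4 + (k + 1) : ℕ) = 2 * k + 5 by ring,
        hβ₂, w2]
    · apply hτeq
      rw [show (k + 4 + 1 : ℕ) = k + 5 by ring, show (k + 4 + (k + 2) : ℕ) = 2 * k + 6 by ring,
        h3, w3]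
    · intro hcon
      have h := congrArg Fin.val hcon
      rw [show (k + 4 + 0 : ℕ) = k + 4 by ring, show (k + 4 + 1 : ℕ) = k + 5 by ring,
        hβ₂, h3] at h
      omega
  by_cases h4 : (τ ((k + 5 : ℕ) : ZMod (4 * k + 6))).val = 4
  · right
    refine ⟨h4, ?_⟩
    apply bitrun_of (k + 6)
    intro a b hab hb heq
    by_cases ht : b - a ≤ k
    · exact CL (k + 6 + a) (b - a) (by omega) ht
        (by rw [show (k + 6 + a + (b - a) : ℕ) = k + 6 + b by omega]; exact heq)
    · have hcase : b - a = k + 1 ∨ b - a = k + 2 := by omega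
      rcases hcase with hc | hc
      · have ha01 : a = 0 ∨ a = 1 := by omega
        rcases ha01 with rfl | rfl
        · have hb' : b = k + 1 := by omega
          subst hb'
          have hv6 : (τ ((k + 6 : ℕ) : ZMod (4 * k + 6))).val = 4 := by
            have h := congrArg Fin.val heq
            rw [show (k + 6 + 0 : ℕ) = k + 6 by ring,
              show (k + 6 + (k + 1) : ℕ) = 2 * k + 7 by ring, w4] at h
            exact h
          exact CL (k + 5) 1 (by omega) (by omega)
            (hτeq _ _ (by rw [show (k + 5 + 1 : ℕ) = k + 6 by ring, h4, hv6]))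
        · have hb' : b = k + 2 := by omega
          subst hb'
          have hv7 : (τ ((k + 7 : ℕ) : ZMod (4 * k + 6))).val = 5 := by
            have h := congrArg Fin.val heq
            rw [show (k + 6 + 1 : ℕ) = k + 7 by ring,
              show (k + 6 + (k + 2) : ℕ) = 2 * k + 8 by ring, w5] at h
            exact h
          apply contra3 (k + 4) 0 (k + 1) 1 (k + 3) 3 (k + 4) (by omega) (by omega) (by omega)
            (by omega) (by omega) (by omega) (by omega) (by omega) (by omega)
          · apply hτeq
            rw [show (k + 4 + 0 : ℕ) = k + 4 by ring,
              show (k + 4 + (k + 1) : ℕ) = 2 * k + 5 by ring, hβ₂, w2]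
          · apply hτeq
            rw [show (k + 4 + 1 : ℕ) = k + 5 by ring,
              show (k + 4 + (k + 3) : ℕ) = 2 * k + 7 by ring, h4, w4]
          · apply hτeq
            rw [show (k + 4 + 3 : ℕ) = k + 7 by ring,
              show (k + 4 + (k + 4) : ℕ) = 2 * k + 8 by ring, hv7, w5]
          · intro hcon
            have h := congrArg Fin.val hcon
            rw [show (k + 4 + 0 : ℕ) = k + 4 by ring, show (k + 4 + 1 : ℕ) = k + 5 by ring,
              hβ₂, h4] at h
            omega
          · intro hcon
            have h := congrArg Fin.val hcon
            rw [show (k + 4 + 0 : ℕ) = k + 4 by ring, show (k + 4 + 3 : ℕ) = k + 7 by ring,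
              hβ₂, hv7] at h
            omega
          · intro hcon
            have h := congrArg Fin.val hcon
            rw [show (k + 4 + 1 : ℕ) = k + 5 by ring, show (k + 4 + 3 : ℕ) = k + 7 by ring,
              h4, hv7] at h
            omega
      · have ha0 : a = 0 := by omega
        have hb' : b = k + 2 := by omega
        subst ha0
        subst hb'
        have hv6 : (τ ((k + 6 : ℕ) : ZMod (4 * k + 6))).val = 5 := by
          have h := congrArg Fin.val heq
          rw [show (k + 6 + 0 : ℕ) = k + 6 by ring,
            show (k + 6 + (k + 2) : ℕ) = 2 * k + 8 by ring, w5] at h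
          exact h
        apply contra2 4 0 (k + 1) 1 (k + 2) (by omega) (by omega) (by omega) (by omega)
          (by omega) (by omega)
        · apply hτeq
          rw [show (4 + 0 : ℕ) = 4 by ring, show (4 + (k + 1) : ℕ) = k + 5 by ring, v4, h4]
        · apply hτeq
          rw [show (4 + 1 : ℕ) = 5 by ring, show (4 + (k + 2) : ℕ) = k + 6 by ring, v5, hv6]
        · intro hcon
          have h := congrArg Fin.val hcon
          rw [show (4 + 0 : ℕ) = 4 by ring, show (4 + 1 : ℕ) = 5 by ring, v4, v5] at h
          omega
  · left
    apply bitrun_of 3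
    intro a b hab hb heq
    by_cases ht : b - a ≤ k
    · exact CL (3 + a) (b - a) (by omega) ht
        (by rw [show (3 + a + (b - a) : ℕ) = 3 + b by omega]; exact heq)
    · have hcase : b - a = k + 1 ∨ b - a = k + 2 := by omega
      rcases hcase with hc | hc
      · have ha01 : a = 0 ∨ a = 1 := by omega
        rcases ha01 with rfl | rfl
        · have hb' : b = k + 1 := by omega
          subst hb'
          have h := congrArg Fin.val heq
          rw [show (3 + 0 : ℕ) = 3 by ring, show (3 + (k + 1) : ℕ) = k + 4 by ring,
            v3, hβ₂] at h
          omega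
        · have hb' : b = k + 2 := by omega
          subst hb'
          have h := congrArg Fin.val heq
          rw [show (3 + 1 : ℕ) = 4 by ring, show (3 + (k + 2) : ℕ) = k + 5 by ring, v4] at h
          exact h4 h.symm
      · have ha0 : a = 0 := by omega
        have hb' : b = k + 2 := by omega
        subst ha0
        subst hb'
        apply hnot3
        have h := congrArg Fin.val heq
        rw [show (3 + 0 : ℕ) = 3 by ring, show (3 + (k + 2) : ℕ) = k + 5 by ring, v3] at h
        exact h.symm
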